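/- With A = [[1,-1,0],[0,1,-1],[0,0,0]], B = [[0,0,0],[0,0,0],[1,1,-1]], and M(k) = diag(ik, ik, -k) for k > 0, one has -(A + B·M(k))⁻¹(A - B·M(k)) = [[-1/5+2i/5, 4/5+2i/5, 2/5-4i/5],[4/5+2i/5, -1/5+2i/5, 2/5-4i/5],[4/5+2i/5, 4/5+2i/5, -3/5-4i/5]], independent of k. -/

import Mathlib

open Matrix

/-- For the three-edge star graph with `A`, `B` as below and `M(k) = diag(ik,ik,-k)`,
`k > 0`, the coefficient matrix `-(A + B·M(k))⁻¹(A - B·M(k))` equals the `k`-independent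
matrix `[[-1/5+2i/5, 4/5+2i/5, 2/5-4i/5],[4/5+2i/5, -1/5+2i/5, 2/5-4i/5],
[4/5+2i/5, 4/5+2i/5, -3/5-4i/5]]`. -/
theorem stmt_15 (k : ℝ) (hk : 0 < k)
    (A B M : Matrix (Fin 3) (Fin 3) ℂ)
    (hA : A = !![1, -1, 0; 0, 1, -1; 0, 0, 0])
    (hB : B = !![0, 0, 0; 0, 0, 0; 1, 1, -1])
    (hM : M = !![Complex.I * (k : ℂ), 0, 0; 0, Complex.I * (k : ℂ), 0; 0, 0, -(k : ℂ)]) :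
    -(A + B * M)⁻¹ * (A - B * M) =
      !![-(1/5) + (2/5) * Complex.I, 4/5 + (2/5) * Complex.I, 2/5 - (4/5) * Complex.I;
         4/5 + (2/5) * Complex.I, -(1/5) + (2/5) * Complex.I, 2/5 - (4/5) * Complex.I;
         4/5 + (2/5) * Complex.I, 4/5 + (2/5) * Complex.I, -(3/5) - (4/5) * Complex.I] := by
  subst hA hB hM
  have hk0 : (k : ℂ) ≠ 0 := by exact_mod_cast hk.ne'
  set N : Matrix (Fin 3) (Fin 3) ℂ :=
    !![1, -1, 0; 0, 1, -1; 0, 0, 0] + !![0, 0, 0; 0, 0, 0; 1, 1, -1] *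
      !![Complex.I * (k : ℂ), 0, 0; 0, Complex.I * (k : ℂ), 0; 0, 0, -(k : ℂ)] with hN
  have hdet : N.det = (k : ℂ) * (1 + 2 * Complex.I) := by
    rw [hN]
    norm_num [Matrix.det_fin_three, Matrix.mul_apply, Fin.sum_univ_succ]
    simp [Matrix.cons_val_two, Matrix.vecHead, Matrix.vecTail]
    ring
  have hdet0 : N.det ≠ 0 := by
    rw [hdet]
    apply mul_ne_zero hk0
    intro h
    have := congrArg Complex.im h
    simp at this
  have : Invertible N := N.invertibleOfIsUnitDet (Ne.isUnit hdet0)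
  rw [neg_mul, neg_eq_iff_eq_neg, Matrix.inv_mul_eq_iff_eq_mul_of_invertible]
  rw [hN]
  ext i j
  fin_cases i <;> fin_cases j <;>
    simp [Matrix.mul_apply, Fin.sum_univ_succ, Matrix.vecHead, Matrix.vecTail] <;> ring_nf <;> simp [Complex.I_sq] <;> ring
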